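/- arXiv:0806.2229 — 3 statements merged into one kernel-verified Lean document; each statement's English description precedes it below -/
import Mathlib

section
/- Let (X, d) be a metric space, A ⊆ X a nonempty subset, g : X → ℝ, and k a real number with 0 ≤ k < 1 such that |g(y) − g(z)| ≤ k · d(y, z) for all y, z ∈ A. Then for every x ∈ A and every q ∈ A one has d(x, q) + g(q) ≥ g(x), with strict inequality whenever q ≠ x; consequently the Lax–Oleinik function u(x) = ⨅_{q ∈ A} (d(x, q) + g(q)) satisfies u(x) = g(x) for every x ∈ A, the infimum being attained only at q = x. -/
/-- If `g` satisfies the compatibility condition `|g y - g z| ≤ k * d(y,z)` on `A`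
with `0 ≤ k < 1`, then for every `x ∈ A` and `q ∈ A` one has
`d(x,q) + g q ≥ g x`, strictly whenever `q ≠ x`; hence the Lax–Oleinik function
`u x = ⨅_{q ∈ A} (d(x,q) + g q)` equals `g x` on `A`, the infimum being attained
only at `q = x`. -/
theorem lax_oleinik_attains_boundary_data
    {X : Type*} [MetricSpace X] (A : Set X) (hA : A.Nonempty)
    (g : X → ℝ) (k : ℝ) (hk0 : 0 ≤ k) (hk1 : k < 1)
    (hg : ∀ y ∈ A, ∀ z ∈ A, |g y - g z| ≤ k * dist y z) :
    ∀ x ∈ A,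
      (∀ q ∈ A, g x ≤ dist x q + g q) ∧
      (∀ q ∈ A, q ≠ x → g x < dist x q + g q) ∧
      (⨅ q : A, (dist x (q : X) + g q)) = g x ∧
      (∀ q ∈ A, dist x q + g q = g x → q = x) := by
  intro x hx
  have hstrict : ∀ q ∈ A, q ≠ x → g x < dist x q + g q := by
    intro q hq hne
    have hd : 0 < dist x q := dist_pos.2 (fun h => hne h.symm)
    have h1 : g x - g q ≤ k * dist x q :=
      (abs_le.1 (hg x hx q hq)).2.trans (le_refl _)
    have h2 : k * dist x q < 1 * dist x q := by
      exact mul_lt_mul_of_pos_right hk1 hd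
    nlinarith
  have hle : ∀ q ∈ A, g x ≤ dist x q + g q := by
    intro q hq
    by_cases h : q = x
    · subst h; simp
    · exact (hstrict q hq h).le
  refine ⟨hle, hstrict, ?_, ?_⟩
  · refine le_antisymm ?_ ?_
    · have := ciInf_le (f := fun q : A => dist x (q : X) + g q)
        ⟨g x, by rintro _ ⟨q, rfl⟩; exact hle q q.2⟩ ⟨x, hx⟩
      simpa using this
    · have : Nonempty A := ⟨⟨x, hx⟩⟩
      exact le_ciInf fun q => hle q q.2
  · intro q hq heq
    by_contra hne
    exact absurd heq (ne_of_gt (hstrict q hq hne))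
end

section
/- Let U ⊆ ℝⁿ be open and let φ₀, φ₁ : U × ℝⁿ → ℝ be C¹ on U × (ℝⁿ \ {0}) and positively 1-homogeneous in the second variable. Let X : U → ℝⁿ be a C¹ vector field with X(p) ≠ 0 for all p ∈ U, such that: (i) φ₀(p, X(p)) = φ₁(p, X(p)) = 1 for all p ∈ U; and (ii) for every p ∈ U the partial Fréchet derivatives in the second variable D_v φ₀(p, X(p)) and D_v φ₁(p, X(p)) have the same kernel (the tangent hyperplanes to the indicatrices of φ₀ and φ₁ at X(p) coincide). Let α : I → U be a C¹ integral curve of X (α'(t) = X(α(t)) on an open interval I) such that the Euler–Lagrange (geodesic) equation for φ₀ holds along α, namely t ↦ D_v φ₀(α(t), α'(t)) is differentiable with derivative D_x φ₀(α(t), α'(t)) for every t ∈ I. Then the Euler–Lagrange equation for φ₁ also holds along α: t ↦ D_v φ₁(α(t), α'(t)) is differentiable with derivative D_x φ₁(α(t), α'(t)). -/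
open Set ContinuousLinearMap

/-- Two continuous linear functionals with the same kernel taking the value 1
at a common point are equal. -/
lemma clm_eq_of_ker_iff {E : Type*} [NormedAddCommGroup E] [NormedSpace ℝ E]
    (f g : E →L[ℝ] ℝ) (x : E) (hf : f x = 1) (hg : g x = 1)
    (hker : ∀ w, f w = 0 ↔ g w = 0) : f = g := by
  ext w
  have h0 : f (w - f w • x) = 0 := by
    simp [map_sub, map_smul, hf]
  have h1 : g (w - f w • x) = 0 := (hker _).mp h0
  have : g w - f w * g x = 0 := by simpa [map_sub, map_smul] using h1
  rw [hg] at this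
  linarith

/-- Euler's relation for a positively 1-homogeneous function. -/
lemma euler_relation {E : Type*} [NormedAddCommGroup E] [NormedSpace ℝ E]
    (f : E → ℝ) (v : E) (hd : DifferentiableAt ℝ f v)
    (hhom : ∀ c : ℝ, 0 < c → f (c • v) = c * f v) :
    fderiv ℝ f v v = f v := by
  have hinner : HasDerivAt (fun c : ℝ => c • v) v 1 := by
    simpa using (hasDerivAt_id (1 : ℝ)).smul_const v
  have h1 : HasDerivAt (fun c : ℝ => f (c • v)) (fderiv ℝ f v v) 1 := by
    have hfd : HasFDerivAt f (fderiv ℝ f v) ((1 : ℝ) • v) := by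
      rw [one_smul]; exact hd.hasFDerivAt
    have hinner' : HasDerivAt (fun c : ℝ => c • v) v 1 := hinner
    exact hfd.comp_hasDerivAt 1 hinner'
  have heq : (fun c : ℝ => f (c • v)) =ᶠ[nhds (1 : ℝ)] fun c : ℝ => c * f v := by
    filter_upwards [isOpen_Ioi.mem_nhds (show (0 : ℝ) < 1 by norm_num)] with c hc
    exact hhom c hc
  have h1' : HasDerivAt (fun c : ℝ => c * f v) (fderiv ℝ f v v) 1 :=
    h1.congr_of_eventuallyEq heq.symm
  have h2 : HasDerivAt (fun c : ℝ => c * f v) (f v) 1 := by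
    simpa using (hasDerivAt_id (1 : ℝ)).mul_const (f v)
  exact h1'.unique h2

/-- Chart form of the lemma "cambia metrica respeta campo": if two Finsler metrics
`φ₀`, `φ₁` give the vector field `X` unit norm, the tangent hyperplanes to their
indicatrices at `X p` coincide (the partial derivatives in the second variable have
the same kernel), and an integral curve `α` of `X` satisfies the Euler–Lagrange
(geodesic) equation for `φ₀`, then `α` satisfies the Euler–Lagrange equation
for `φ₁` as well. -/
theorem integral_curves_geodesic_for_both_metrics
    {n : ℕ} (U : Set (Fin n → ℝ)) (hU : IsOpen U)
    (φ₀ φ₁ : (Fin n → ℝ) × (Fin n → ℝ) → ℝ)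
    (hφ₀ : ContDiffOn ℝ 1 φ₀ (U ×ˢ {v : Fin n → ℝ | v ≠ 0}))
    (hφ₁ : ContDiffOn ℝ 1 φ₁ (U ×ˢ {v : Fin n → ℝ | v ≠ 0}))
    (hhom₀ : ∀ p ∈ U, ∀ c : ℝ, 0 < c → ∀ v : Fin n → ℝ, φ₀ (p, c • v) = c * φ₀ (p, v))
    (hhom₁ : ∀ p ∈ U, ∀ c : ℝ, 0 < c → ∀ v : Fin n → ℝ, φ₁ (p, c • v) = c * φ₁ (p, v))
    (X : (Fin n → ℝ) → (Fin n → ℝ))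
    (hX : ContDiffOn ℝ 1 X U)
    (hX0 : ∀ p ∈ U, X p ≠ 0)
    (hunit : ∀ p ∈ U, φ₀ (p, X p) = 1 ∧ φ₁ (p, X p) = 1)
    (hker : ∀ p ∈ U, ∀ w : Fin n → ℝ,
      fderiv ℝ (fun v => φ₀ (p, v)) (X p) w = 0 ↔
      fderiv ℝ (fun v => φ₁ (p, v)) (X p) w = 0)
    (a b : ℝ) (α : ℝ → (Fin n → ℝ))
    (hα : ∀ t ∈ Set.Ioo a b, α t ∈ U)
    (hint : ∀ t ∈ Set.Ioo a b, HasDerivAt α (X (α t)) t)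
    (hEL₀ : ∀ t ∈ Set.Ioo a b,
      HasDerivAt (fun s => fderiv ℝ (fun v => φ₀ (α s, v)) (X (α s)))
        (fderiv ℝ (fun x => φ₀ (x, X (α t))) (α t)) t) :
    ∀ t ∈ Set.Ioo a b,
      HasDerivAt (fun s => fderiv ℝ (fun v => φ₁ (α s, v)) (X (α s)))
        (fderiv ℝ (fun x => φ₁ (x, X (α t))) (α t)) t := by
  have hopen : IsOpen (U ×ˢ {v : Fin n → ℝ | v ≠ 0}) :=
    hU.prod isOpen_ne
  have hmem : ∀ p ∈ U, (p, X p) ∈ U ×ˢ {v : Fin n → ℝ | v ≠ 0} :=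
    fun p hp => ⟨hp, hX0 p hp⟩
  have hd₀ : ∀ p ∈ U, DifferentiableAt ℝ φ₀ (p, X p) := fun p hp =>
    ((hφ₀.differentiableOn one_ne_zero).differentiableAt (hopen.mem_nhds (hmem p hp)))
  have hd₁ : ∀ p ∈ U, DifferentiableAt ℝ φ₁ (p, X p) := fun p hp =>
    ((hφ₁.differentiableOn one_ne_zero).differentiableAt (hopen.mem_nhds (hmem p hp)))
  -- Partial derivatives in the second variable as compositions
  have hv₀ : ∀ p ∈ U, HasFDerivAt (fun v => φ₀ (p, v))
      ((fderiv ℝ φ₀ (p, X p)).comp (inr ℝ _ _)) (X p) := fun p hp =>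
    (hd₀ p hp).hasFDerivAt.comp (X p) (hasFDerivAt_prodMk_right p (X p))
  have hv₁ : ∀ p ∈ U, HasFDerivAt (fun v => φ₁ (p, v))
      ((fderiv ℝ φ₁ (p, X p)).comp (inr ℝ _ _)) (X p) := fun p hp =>
    (hd₁ p hp).hasFDerivAt.comp (X p) (hasFDerivAt_prodMk_right p (X p))
  -- Partial derivatives in the first variable as compositions
  have hx₀ : ∀ p ∈ U, HasFDerivAt (fun x => φ₀ (x, X p))
      ((fderiv ℝ φ₀ (p, X p)).comp (inl ℝ _ _)) p := fun p hp =>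
    (hd₀ p hp).hasFDerivAt.comp p (hasFDerivAt_prodMk_left p (X p))
  have hx₁ : ∀ p ∈ U, HasFDerivAt (fun x => φ₁ (x, X p))
      ((fderiv ℝ φ₁ (p, X p)).comp (inl ℝ _ _)) p := fun p hp =>
    (hd₁ p hp).hasFDerivAt.comp p (hasFDerivAt_prodMk_left p (X p))
  -- Euler's relation gives the partial v-derivatives value 1 at X p
  have heuler₀ : ∀ p ∈ U, fderiv ℝ (fun v => φ₀ (p, v)) (X p) (X p) = 1 := by
    intro p hp
    rw [euler_relation (fun v => φ₀ (p, v)) (X p) (hv₀ p hp).differentiableAt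
      (fun c hc => hhom₀ p hp c hc (X p))]
    exact (hunit p hp).1
  have heuler₁ : ∀ p ∈ U, fderiv ℝ (fun v => φ₁ (p, v)) (X p) (X p) = 1 := by
    intro p hp
    rw [euler_relation (fun v => φ₁ (p, v)) (X p) (hv₁ p hp).differentiableAt
      (fun c hc => hhom₁ p hp c hc (X p))]
    exact (hunit p hp).2
  -- Hence the v-partial derivatives coincide on U
  have hψ : ∀ p ∈ U,
      fderiv ℝ (fun v => φ₀ (p, v)) (X p) = fderiv ℝ (fun v => φ₁ (p, v)) (X p) :=
    fun p hp => clm_eq_of_ker_iff _ _ (X p) (heuler₀ p hp) (heuler₁ p hp) (hker p hp)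
  -- The x-partial derivatives coincide as well
  have hDx : ∀ p ∈ U,
      fderiv ℝ (fun x => φ₀ (x, X p)) p = fderiv ℝ (fun x => φ₁ (x, X p)) p := by
    intro p hp
    have hXd : HasFDerivAt X (fderiv ℝ X p) p :=
      ((hX.differentiableOn one_ne_zero).differentiableAt (hU.mem_nhds hp)).hasFDerivAt
    have hpair : HasFDerivAt (fun q => (q, X q))
        ((ContinuousLinearMap.id ℝ _).prod (fderiv ℝ X p)) p :=
      HasFDerivAt.prodMk (hasFDerivAt_id p) hXd
    have hc₀ : HasFDerivAt (fun q => φ₀ (q, X q))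
        ((fderiv ℝ φ₀ (p, X p)).comp ((ContinuousLinearMap.id ℝ _).prod (fderiv ℝ X p))) p :=
      (hd₀ p hp).hasFDerivAt.comp p hpair
    have hc₁ : HasFDerivAt (fun q => φ₁ (q, X q))
        ((fderiv ℝ φ₁ (p, X p)).comp ((ContinuousLinearMap.id ℝ _).prod (fderiv ℝ X p))) p :=
      (hd₁ p hp).hasFDerivAt.comp p hpair
    have hsub : HasFDerivAt (fun q => φ₀ (q, X q) - φ₁ (q, X q))
        ((fderiv ℝ φ₀ (p, X p)).comp ((ContinuousLinearMap.id ℝ _).prod (fderiv ℝ X p)) -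
         (fderiv ℝ φ₁ (p, X p)).comp ((ContinuousLinearMap.id ℝ _).prod (fderiv ℝ X p))) p :=
      hc₀.sub hc₁
    have hzero : HasFDerivAt (fun q => φ₀ (q, X q) - φ₁ (q, X q)) (0 : _ →L[ℝ] ℝ) p := by
      have heq : (fun q => φ₀ (q, X q) - φ₁ (q, X q)) =ᶠ[nhds p] fun _ => (0 : ℝ) := by
        filter_upwards [hU.mem_nhds hp] with q hq
        rw [(hunit q hq).1, (hunit q hq).2, sub_self]
      exact (hasFDerivAt_const (0 : ℝ) p).congr_of_eventuallyEq heq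
    have hkey := hsub.unique hzero
    -- evaluate at an arbitrary w
    ext w
    have hw : fderiv ℝ φ₀ (p, X p) (w, fderiv ℝ X p w) =
        fderiv ℝ φ₁ (p, X p) (w, fderiv ℝ X p w) := by
      have := congrArg (fun (L : _ →L[ℝ] ℝ) => L w) hkey
      simpa [sub_eq_zero] using this
    have hsplit₀ : fderiv ℝ φ₀ (p, X p) (w, fderiv ℝ X p w) =
        fderiv ℝ φ₀ (p, X p) (w, 0) + fderiv ℝ φ₀ (p, X p) (0, fderiv ℝ X p w) := by
      rw [← map_add]; congr 1; simp [Prod.ext_iff]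
    have hsplit₁ : fderiv ℝ φ₁ (p, X p) (w, fderiv ℝ X p w) =
        fderiv ℝ φ₁ (p, X p) (w, 0) + fderiv ℝ φ₁ (p, X p) (0, fderiv ℝ X p w) := by
      rw [← map_add]; congr 1; simp [Prod.ext_iff]
    have hvv : fderiv ℝ φ₀ (p, X p) (0, fderiv ℝ X p w) =
        fderiv ℝ φ₁ (p, X p) (0, fderiv ℝ X p w) := by
      have h0 := congrArg (fun (L : _ →L[ℝ] ℝ) => L (fderiv ℝ X p w))
        ((hv₀ p hp).fderiv.symm.trans ((hψ p hp).trans (hv₁ p hp).fderiv))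
      simpa using h0
    have hxx : fderiv ℝ φ₀ (p, X p) (w, 0) = fderiv ℝ φ₁ (p, X p) (w, 0) := by
      rw [hsplit₀, hsplit₁] at hw
      rw [hvv] at hw
      linarith
    rw [(hx₀ p hp).fderiv, (hx₁ p hp).fderiv]
    simpa using hxx
  -- Conclusion
  intro t ht
  have hteq : (fun s => fderiv ℝ (fun v => φ₁ (α s, v)) (X (α s))) =ᶠ[nhds t]
      (fun s => fderiv ℝ (fun v => φ₀ (α s, v)) (X (α s))) := by
    filter_upwards [isOpen_Ioo.mem_nhds ht] with s hs
    exact (hψ (α s) (hα s hs)).symm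
  have h := (hEL₀ t ht).congr_of_eventuallyEq hteq
  rwa [hDx (α t) (hα t ht)] at h
end

section
/- Let U ⊆ ℝⁿ be open, φ : U × ℝⁿ → ℝ a function that is C² on U × (ℝⁿ \ {0}) and positively 1-homogeneous in the second variable, and X : U → ℝⁿ a C¹ vector field with X(p) ≠ 0 and φ(p, X(p)) = 1 for all p ∈ U. Define the dual one-form ω : U → (ℝⁿ)* by ω(p) = D_v φ(p, X(p)). Then the following are equivalent: (a) every C¹ integral curve α of X satisfies the Euler–Lagrange (geodesic) equation for φ, i.e. t ↦ D_v φ(α(t), α'(t)) is differentiable with derivative D_x φ(α(t), α'(t)); (b) the Lie derivative of ω in the direction X vanishes, i.e. for every p ∈ U and every w ∈ ℝⁿ, (fderiv ℝ ω p (X p)) w + (ω p) (fderiv ℝ X p w) = 0. -/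
/-- Chart form of the lemma "characterization of Finsler geodesics": for a
non-vanishing unit vector field `X` of a Finsler metric `φ` with dual one-form
`ω p = D_v φ (p, X p)`, all integral curves of `X` satisfy the Euler–Lagrange
(geodesic) equation for `φ` if and only if the Lie derivative of `ω` in the
direction `X` vanishes. -/
theorem integral_curves_geodesics_iff_lie_derivative_of_dual_form_vanishes
    {n : ℕ} (U : Set (Fin n → ℝ)) (hU : IsOpen U)
    (φ : (Fin n → ℝ) × (Fin n → ℝ) → ℝ)
    (hφ : ContDiffOn ℝ 2 φ (U ×ˢ {v : Fin n → ℝ | v ≠ 0}))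
    (hhom : ∀ p ∈ U, ∀ c : ℝ, 0 < c → ∀ v : Fin n → ℝ, φ (p, c • v) = c * φ (p, v))
    (X : (Fin n → ℝ) → (Fin n → ℝ))
    (hX : ContDiffOn ℝ 1 X U)
    (hX0 : ∀ p ∈ U, X p ≠ 0)
    (hunit : ∀ p ∈ U, φ (p, X p) = 1)
    (ω : (Fin n → ℝ) → ((Fin n → ℝ) →L[ℝ] ℝ))
    (hω : ∀ p : Fin n → ℝ, ω p = fderiv ℝ (fun v => φ (p, v)) (X p)) :
    (∀ (a b : ℝ) (α : ℝ → (Fin n → ℝ)),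
        (∀ t ∈ Set.Ioo a b, α t ∈ U) →
        (∀ t ∈ Set.Ioo a b, HasDerivAt α (X (α t)) t) →
        ∀ t ∈ Set.Ioo a b,
          HasDerivAt (fun s => fderiv ℝ (fun v => φ (α s, v)) (X (α s)))
            (fderiv ℝ (fun x => φ (x, X (α t))) (α t)) t)
    ↔
    (∀ p ∈ U, ∀ w : Fin n → ℝ,
        (fderiv ℝ ω p (X p)) w + (ω p) (fderiv ℝ X p w) = 0) := by
  have hsopen : IsOpen (U ×ˢ {v : Fin n → ℝ | v ≠ 0}) :=
    hU.prod isOpen_ne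
  have hmem : ∀ p ∈ U, (p, X p) ∈ U ×ˢ {v : Fin n → ℝ | v ≠ 0} :=
    fun p hp => ⟨hp, hX0 p hp⟩
  have hφat : ∀ p ∈ U, ContDiffAt ℝ 2 φ (p, X p) :=
    fun p hp => hφ.contDiffAt (hsopen.mem_nhds (hmem p hp))
  have hφd : ∀ p ∈ U, DifferentiableAt ℝ φ (p, X p) :=
    fun p hp => (hφat p hp).differentiableAt (by norm_num)
  have hXd : ∀ p ∈ U, DifferentiableAt ℝ X p :=
    fun p hp => (hX.contDiffAt (hU.mem_nhds hp)).differentiableAt (by norm_num)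
  have hpartv : ∀ p ∈ U, HasFDerivAt (fun v => φ (p, v))
      ((fderiv ℝ φ (p, X p)).comp (ContinuousLinearMap.inr ℝ _ _)) (X p) :=
    fun p hp => (hφd p hp).hasFDerivAt.comp (X p) (hasFDerivAt_prodMk_right p (X p))
  have hpartx : ∀ p ∈ U, HasFDerivAt (fun x => φ (x, X p))
      ((fderiv ℝ φ (p, X p)).comp (ContinuousLinearMap.inl ℝ _ _)) p :=
    fun p hp => (hφd p hp).hasFDerivAt.comp p (hasFDerivAt_prodMk_left p (X p))
  have hωeq : ∀ p ∈ U, ω p = (fderiv ℝ φ (p, X p)).comp (ContinuousLinearMap.inr ℝ _ _) := by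
    intro p hp
    rw [hω p]
    exact (hpartv p hp).fderiv
  -- Euler identity from differentiating the constant function p ↦ φ (p, X p) = 1
  have heuler : ∀ p ∈ U, ∀ w : Fin n → ℝ,
      fderiv ℝ (fun x => φ (x, X p)) p w + (ω p) (fderiv ℝ X p w) = 0 := by
    intro p hp w
    have hg : HasFDerivAt (fun q => φ (q, X q))
        ((fderiv ℝ φ (p, X p)).comp
          ((ContinuousLinearMap.id ℝ _).prod (fderiv ℝ X p))) p :=
      (hφd p hp).hasFDerivAt.comp p ((hasFDerivAt_id p).prodMk (hXd p hp).hasFDerivAt)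
    have hg0 : fderiv ℝ (fun q => φ (q, X q)) p = 0 := by
      have he : (fun q => φ (q, X q)) =ᶠ[nhds p] fun _ => (1 : ℝ) :=
        Filter.eventuallyEq_of_mem (hU.mem_nhds hp) (fun q hq => hunit q hq)
      rw [he.fderiv_eq, fderiv_fun_const]
      rfl
    have h1 : fderiv ℝ (fun q => φ (q, X q)) p w
        = fderiv ℝ φ (p, X p) (w, fderiv ℝ X p w) := by
      rw [hg.fderiv]; rfl
    have h2 : fderiv ℝ (fun x => φ (x, X p)) p w = fderiv ℝ φ (p, X p) (w, 0) := by
      rw [(hpartx p hp).fderiv]; rfl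
    have h3 : (ω p) (fderiv ℝ X p w) = fderiv ℝ φ (p, X p) (0, fderiv ℝ X p w) := by
      rw [hωeq p hp]; rfl
    have h4 : ((w, (0 : Fin n → ℝ)) : (Fin n → ℝ) × (Fin n → ℝ)) + (0, fderiv ℝ X p w)
        = (w, fderiv ℝ X p w) := by
      simp [Prod.ext_iff]
    rw [h2, h3, ← ContinuousLinearMap.map_add, h4, ← h1, hg0]
    rfl
  -- ω is differentiable on U
  have hωd : ∀ p ∈ U, DifferentiableAt ℝ ω p := by
    intro p hp
    have hf : DifferentiableAt ℝ (fderiv ℝ φ) (p, X p) :=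
      ((hφat p hp).fderiv_right (m := 1) (by norm_num)).differentiableAt (by norm_num)
    have h1 : DifferentiableAt ℝ
        (fun q => (fderiv ℝ φ (q, X q)).comp (ContinuousLinearMap.inr ℝ _ _)) p :=
      (hf.comp p (differentiableAt_id.prodMk (hXd p hp))).clm_comp (differentiableAt_const _)
    exact h1.congr_of_eventuallyEq
      (Filter.eventuallyEq_of_mem (hU.mem_nhds hp) (fun q hq => hωeq q hq))
  -- derivative of ω along an integral curve
  have hcurve : ∀ (α : ℝ → (Fin n → ℝ)) (t : ℝ), α t ∈ U → HasDerivAt α (X (α t)) t →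
      HasDerivAt (fun s => fderiv ℝ (fun v => φ (α s, v)) (X (α s)))
        (fderiv ℝ ω (α t) (X (α t))) t := by
    intro α t htU hα
    have h := ((hωd (α t) htU).hasFDerivAt).comp_hasDerivAt t hα
    have hfun : (fun s => fderiv ℝ (fun v => φ (α s, v)) (X (α s))) = fun s => ω (α s) :=
      funext fun s => (hω (α s)).symm
    rw [hfun]
    exact h
  constructor
  · -- geodesics ⇒ Lie derivative vanishes
    intro H p hp w
    obtain ⟨f, hf0, ε, hε, hf⟩ :=
      ContDiffAt.exists_forall_mem_closedBall_exists_eq_forall_mem_Ioo_hasDerivAt₀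
        (x₀ := p) (hX.contDiffAt (hU.mem_nhds hp)) (0 : ℝ)
    have h0mem : (0 : ℝ) ∈ Set.Ioo (0 - ε) (0 + ε) := by
      constructor <;> simp [hε]
    have hcont : ContinuousAt f 0 := (hf 0 h0mem).continuousAt
    have hpre : f ⁻¹' U ∈ nhds (0 : ℝ) := by
      apply hcont.preimage_mem_nhds
      rw [hf0]
      exact hU.mem_nhds hp
    obtain ⟨δ', hδ', hball⟩ := Metric.mem_nhds_iff.mp hpre
    set δ := min δ' ε with hδdef
    have hδpos : 0 < δ := lt_min hδ' hε
    have hUmem : ∀ t ∈ Set.Ioo (-δ) δ, f t ∈ U := by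
      intro t ht
      apply hball
      simp only [Metric.mem_ball, Real.dist_eq, sub_zero]
      exact lt_of_lt_of_le (abs_lt.mpr ⟨lt_of_le_of_lt (neg_le_neg (min_le_left _ _)) ht.1
        |>.trans_le le_rfl, lt_of_lt_of_le ht.2 (min_le_left _ _)⟩) le_rfl
    have hderiv : ∀ t ∈ Set.Ioo (-δ) δ, HasDerivAt f (X (f t)) t := by
      intro t ht
      apply hf
      constructor
      · calc 0 - ε = -ε := by ring
          _ ≤ -δ := neg_le_neg (min_le_right _ _)
          _ < t := ht.1
      · calc t < δ := ht.2
          _ ≤ ε := min_le_right _ _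
          _ = 0 + ε := by ring
    have h0mem' : (0 : ℝ) ∈ Set.Ioo (-δ) δ := ⟨neg_lt_zero.mpr hδpos, hδpos⟩
    have hgeo := H (-δ) δ f hUmem hderiv 0 h0mem'
    have hlie := hcurve f 0 (hUmem 0 h0mem') (hderiv 0 h0mem')
    have huniq : fderiv ℝ ω (f 0) (X (f 0)) = fderiv ℝ (fun x => φ (x, X (f 0))) (f 0) :=
      hlie.unique hgeo
    rw [hf0] at huniq
    have := heuler p hp w
    have h5 : fderiv ℝ ω p (X p) w = fderiv ℝ (fun x => φ (x, X p)) p w := by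
      rw [huniq]
    linarith
  · -- Lie derivative vanishes ⇒ geodesics
    intro H a b α hαU hαd t ht
    have hp : α t ∈ U := hαU t ht
    have hkey : fderiv ℝ ω (α t) (X (α t)) = fderiv ℝ (fun x => φ (x, X (α t))) (α t) := by
      ext w
      have h1 := H (α t) hp w
      have h2 := heuler (α t) hp w
      linarith
    have := hcurve α t hp (hαd t ht)
    rwa [hkey] at this
end
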